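/- arXiv:math/0204163 — 3 statements merged into one kernel-verified Lean document; each statement's English description precedes it below -/
import Mathlib

section
/- Let s be a complex number with Re(s) > 1. For every t > 0 the family k ↦ (t²k²+1)^{-s/2}, indexed by k ∈ ℤ, is summable, and the limit as t → 0⁺ of t · Σ_{k∈ℤ} (t²k²+1)^{-s/2} exists and equals √π · Γ((s−1)/2) / Γ(s/2). -/
open Filter Topology MeasureTheory Set

noncomputable def Fz (s : ℂ) (y : ℝ) : ℂ := ((y ^ 2 + 1 : ℝ) : ℂ) ^ (-s / 2)

lemma cpow_pos_eq_exp {a : ℝ} (ha : 0 < a) (c : ℂ) :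
    ((a : ℝ) : ℂ) ^ c = Complex.exp ((Real.log a : ℂ) * c) := by
  rw [Complex.cpow_def_of_ne_zero (by exact_mod_cast ha.ne'), Complex.ofReal_log ha.le]

lemma norm_cpow_pos {a : ℝ} (ha : 0 < a) (c : ℂ) : ‖((a : ℝ) : ℂ) ^ c‖ = a ^ c.re := by
  rw [Complex.norm_cpow_eq_rpow_re_of_pos ha]

lemma Fz_cont (s : ℂ) : Continuous (Fz s) := by
  have h : ∀ y : ℝ, Fz s y = Complex.exp ((Real.log (y ^ 2 + 1) : ℂ) * (-s / 2)) := fun y =>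
    cpow_pos_eq_exp (by positivity) _
  simp only [funext h]
  have hlog : Continuous fun y : ℝ => Real.log (y ^ 2 + 1) :=
    ((continuous_pow 2).add continuous_const).log fun y => (by positivity : y ^ 2 + 1 ≠ 0)
  exact Complex.continuous_exp.comp
    ((Complex.continuous_ofReal.comp hlog).mul continuous_const)

lemma norm_Fz (s : ℂ) (y : ℝ) : ‖Fz s y‖ = (y ^ 2 + 1) ^ (-s.re / 2) := by
  rw [Fz, norm_cpow_pos (by positivity)]
  norm_num [Complex.div_re, Complex.normSq]

lemma Fz_integrable {s : ℂ} (hs : 1 < s.re) : Integrable (Fz s) := by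
  have h : Integrable (fun x : ℝ => ((1 : ℝ) + ‖x‖ ^ 2) ^ (-s.re / 2)) volume :=
    integrable_rpow_neg_one_add_norm_sq (E := ℝ) (by simpa using hs)
  refine h.mono' (Fz_cont s).aestronglyMeasurable (Eventually.of_forall fun y => ?_)
  rw [norm_Fz]
  simp [Real.norm_eq_abs, sq_abs, add_comm]

lemma key_ineq {x y : ℝ} (h : |y - x| ≤ 1) : (x ^ 2 + 1) / 3 ≤ y ^ 2 + 1 := by
  have h1 := abs_le.mp h
  have h2 : (y - x) ^ 2 ≤ 1 := by nlinarith [h1.1, h1.2]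
  nlinarith [h2, sq_nonneg (2 * y - x), sq_nonneg y]

lemma Fz_bound {s : ℂ} (hsre : 0 < s.re) {x y : ℝ} (h : |y - x| ≤ 1) :
    ‖Fz s y‖ ≤ 3 ^ (s.re / 2) * (x ^ 2 + 1) ^ (-s.re / 2) := by
  rw [norm_Fz]
  have h1 : ((x ^ 2 + 1) / 3 : ℝ) ^ (-s.re / 2) = 3 ^ (s.re / 2) * (x ^ 2 + 1) ^ (-s.re / 2) := by
    rw [Real.div_rpow (by positivity) (by norm_num), neg_div,
      Real.rpow_neg (by norm_num : (0:ℝ) ≤ 3)]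
    ring_nf
    rw [inv_inv]
  rw [← h1]
  exact Real.rpow_le_rpow_of_nonpos (by positivity) (key_ineq h) (by linarith)

lemma neg_div_two_re (s : ℂ) : (-s / 2).re = -s.re / 2 := by
  simp [Complex.div_re, Complex.normSq]

lemma summable_aux {s : ℂ} (hs : 1 < s.re) {t : ℝ} (ht : 0 < t) :
    Summable fun k : ℤ => ((t ^ 2 * (k : ℝ) ^ 2 + 1 : ℝ) : ℂ) ^ (-s / 2) := by
  rw [← summable_norm_iff]
  have hg : Summable fun k : ℤ => t ^ (-s.re) * |(k : ℝ)| ^ (-s.re) :=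
    (Real.summable_abs_int_rpow hs).mul_left _
  refine hg.of_norm_bounded_eventually ?_
  have hne : ∀ᶠ k : ℤ in Filter.cofinite, k ≠ 0 := Filter.eventually_cofinite_ne 0
  filter_upwards [hne] with k hk
  have hk' : (0 : ℝ) < |(k : ℝ)| := by
    simp only [abs_pos]
    exact_mod_cast hk
  rw [norm_norm, norm_cpow_pos (by positivity)]
  have h1 : (t ^ 2 * (k : ℝ) ^ 2 + 1) ^ ((-s / 2).re) ≤ (t ^ 2 * (k : ℝ) ^ 2) ^ ((-s / 2).re) := by
    apply Real.rpow_le_rpow_of_nonpos (by positivity) (by linarith)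
    rw [neg_div_two_re]
    linarith
  refine h1.trans (le_of_eq ?_)
  have h2 : t ^ 2 * (k : ℝ) ^ 2 = (t * |(k : ℝ)|) ^ (2 : ℕ) := by
    rw [mul_pow, sq_abs]
  rw [h2, ← Real.rpow_natCast (t * |(k : ℝ)|) 2, ← Real.rpow_mul (by positivity),
    Real.mul_rpow ht.le (abs_nonneg _)]
  rw [neg_div_two_re]
  norm_num
  ring_nf

lemma floor_dist {t x : ℝ} (ht : 0 < t) : |t * ⌊x / t⌋ - x| ≤ t := by
  have h1 : (⌊x / t⌋ : ℝ) ≤ x / t := Int.floor_le _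
  have h2 : x / t < ⌊x / t⌋ + 1 := Int.lt_floor_add_one _
  have e : t * (x / t) = x := by field_simp
  have l1 := mul_le_mul_of_nonneg_left h1 ht.le
  have l2 := mul_lt_mul_of_pos_left h2 ht
  rw [e] at l1 l2
  rw [abs_le]
  constructor <;> nlinarith

lemma step_integrable {s : ℂ} (hs : 1 < s.re) {t : ℝ} (ht : 0 < t) (ht1 : t ≤ 1) :
    Integrable (fun x : ℝ => Fz s (t * ⌊x / t⌋)) := by
  have hfl : Measurable fun x : ℝ => ⌊x / t⌋ := (measurable_id.div_const t).floor
  have hmeas : Measurable fun x : ℝ => Fz s (t * ⌊x / t⌋) :=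
    (Fz_cont s).measurable.comp ((measurable_from_top (f := fun k : ℤ => t * (k : ℝ))).comp hfl)
  have hB : Integrable (fun x : ℝ => 3 ^ (s.re / 2) * (x ^ 2 + 1) ^ (-s.re / 2)) := by
    have h := (Fz_integrable hs).norm
    rw [show (fun y : ℝ => ‖Fz s y‖) = fun y : ℝ => (y ^ 2 + 1) ^ (-s.re / 2) from
      funext (norm_Fz s)] at h
    exact h.const_mul _
  refine hB.mono' hmeas.aestronglyMeasurable (Eventually.of_forall fun x => ?_)
  exact Fz_bound (by linarith) ((floor_dist ht).trans ht1)

lemma step_identity {s : ℂ} (hs : 1 < s.re) {t : ℝ} (ht : 0 < t) (ht1 : t ≤ 1) :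
    (t : ℂ) * ∑' k : ℤ, ((t ^ 2 * (k : ℝ) ^ 2 + 1 : ℝ) : ℂ) ^ (-s / 2)
      = ∫ x : ℝ, Fz s (t * ⌊x / t⌋) := by
  set Φ : ℝ → ℂ := fun x => Fz s (t * ⌊x / t⌋) with hΦ
  set A : ℤ → Set ℝ := fun k => Ico (t * k) (t * (k + 1)) with hA
  have hAm : ∀ k, MeasurableSet (A k) := fun k => measurableSet_Ico
  have hdisj : Pairwise (Function.onFun Disjoint A) := by
    intro k l hkl
    have key : ∀ k l : ℤ, k < l → Disjoint (A k) (A l) := by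
      intro k l h
      refine Set.disjoint_left.mpr fun x hx hx' => ?_
      have h1 : x < t * (k + 1) := hx.2
      have h2 : t * l ≤ x := hx'.1
      have h3 : (k : ℝ) + 1 ≤ l := by exact_mod_cast h
      nlinarith
    rcases lt_or_gt_of_ne hkl with h | h
    · exact key _ _ h
    · exact (key _ _ h).symm
  have hU : ⋃ k, A k = Set.univ := by
    refine Set.eq_univ_iff_forall.mpr fun x => Set.mem_iUnion.mpr ⟨⌊x / t⌋, ?_⟩
    constructor
    · have := Int.floor_le (x / t)
      calc t * ⌊x / t⌋ ≤ t * (x / t) := by nlinarith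
        _ = x := by field_simp
    · have := Int.lt_floor_add_one (x / t)
      calc x = t * (x / t) := by field_simp
        _ < t * (⌊x / t⌋ + 1) := by push_cast; nlinarith
  have hint := (step_integrable hs ht ht1).integrableOn (s := ⋃ k, A k)
  have hsum := MeasureTheory.hasSum_integral_iUnion hAm hdisj hint
  have hval : ∀ k : ℤ, (∫ x in A k, Φ x) =
      t • ((t ^ 2 * (k : ℝ) ^ 2 + 1 : ℝ) : ℂ) ^ (-s / 2) := by
    intro k
    have hcongr : ∀ x ∈ A k, Φ x = ((t ^ 2 * (k : ℝ) ^ 2 + 1 : ℝ) : ℂ) ^ (-s / 2) := by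
      intro x hx
      have hfl : ⌊x / t⌋ = k := by
        rw [Int.floor_eq_iff]
        constructor
        · rw [le_div_iff₀ ht]; linarith [hx.1]
        · rw [div_lt_iff₀ ht]; push_cast; linarith [hx.2]
      simp only [hΦ, hfl, Fz]
      congr 2
      ring
    rw [setIntegral_congr_fun (hAm k) hcongr, setIntegral_const, measureReal_def, Real.volume_Ico]
    congr 1
    rw [ENNReal.toReal_ofReal (by nlinarith)]
    ring
  rw [hU, MeasureTheory.setIntegral_univ] at hsum
  change HasSum (fun n => ∫ x in A n, Φ x) _ at hsum
  simp_rw [hval] at hsum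
  rw [← hsum.tsum_eq]
  simp_rw [← Complex.real_smul, ← smul_eq_mul]
  rw [tsum_const_smul'']

lemma tendsto_integral_step {s : ℂ} (hs : 1 < s.re) :
    Tendsto (fun t : ℝ => ∫ x : ℝ, Fz s (t * ⌊x / t⌋)) (𝓝[>] (0:ℝ))
      (𝓝 (∫ x : ℝ, Fz s x)) := by
  have hB : Integrable (fun x : ℝ => 3 ^ (s.re / 2) * (x ^ 2 + 1) ^ (-s.re / 2)) := by
    have h := (Fz_integrable hs).norm
    rw [show (fun y : ℝ => ‖Fz s y‖) = fun y : ℝ => (y ^ 2 + 1) ^ (-s.re / 2) from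
      funext (norm_Fz s)] at h
    exact h.const_mul _
  refine MeasureTheory.tendsto_integral_filter_of_dominated_convergence _ ?_ ?_ hB ?_
  · refine Eventually.of_forall fun t => ?_
    have hfl : Measurable fun x : ℝ => ⌊x / t⌋ := (measurable_id.div_const t).floor
    exact ((Fz_cont s).measurable.comp
      ((measurable_from_top (f := fun k : ℤ => t * (k : ℝ))).comp hfl)).aestronglyMeasurable
  · have hmem : Set.Ioo (0:ℝ) 1 ∈ 𝓝[>] (0:ℝ) :=
      Ioo_mem_nhdsGT_of_mem ⟨le_refl 0, zero_lt_one⟩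
    filter_upwards [hmem] with t ht
    refine Eventually.of_forall fun x => ?_
    exact Fz_bound (by linarith) ((floor_dist ht.1).trans ht.2.le)
  · refine Eventually.of_forall fun x => ?_
    have harg : Tendsto (fun t : ℝ => t * ⌊x / t⌋) (𝓝[>] (0:ℝ)) (𝓝 x) := by
      rw [tendsto_iff_dist_tendsto_zero]
      apply squeeze_zero' (g := fun t : ℝ => t) (Eventually.of_forall fun t => dist_nonneg)
      · have hmem : Set.Ioi (0:ℝ) ∈ 𝓝[>] (0:ℝ) := self_mem_nhdsWithin
        filter_upwards [hmem] with t ht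
        rw [Real.dist_eq]
        exact floor_dist ht
      · exact tendsto_id.mono_right nhdsWithin_le_nhds
    exact ((Fz_cont s).tendsto x).comp harg

lemma Fz_even (s : ℂ) (x : ℝ) : Fz s (-x) = Fz s x := by simp [Fz]

lemma integral_Fz_eq_two (s : ℂ) (hs : 1 < s.re) :
    ∫ x : ℝ, Fz s x = 2 * ∫ x in Set.Ioi (0:ℝ), Fz s x := by
  have hint := Fz_integrable hs
  have h1 : (∫ x in Set.Iic (0:ℝ), Fz s x) + ∫ x in Set.Ioi (0:ℝ), Fz s x = ∫ x : ℝ, Fz s x := by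
    simpa using MeasureTheory.integral_add_compl (measurableSet_Iic (a := (0:ℝ))) hint
  have h2 : (∫ x in Set.Iic (0:ℝ), Fz s x) = ∫ x in Set.Ioi (0:ℝ), Fz s x := by
    rw [show (∫ x in Set.Iic (0:ℝ), Fz s x) = ∫ x in Set.Iic (0:ℝ), Fz s (-x) from
      integral_congr_ae (Eventually.of_forall fun x => (Fz_even s x).symm),
      integral_comp_neg_Iic, neg_zero]
  rw [← h1, h2]
  ring

lemma image_phi : (fun y : ℝ => (y ^ 2 + 1)⁻¹) '' Set.Ioi 0 = Set.Ioo (0:ℝ) 1 := by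
  ext x
  constructor
  · rintro ⟨y, hy, rfl⟩
    have hy' : (0:ℝ) < y := hy
    constructor
    · positivity
    · rw [inv_lt_one_iff₀]
      right
      nlinarith
  · rintro ⟨hx0, hx1⟩
    refine ⟨Real.sqrt (x⁻¹ - 1), ?_, ?_⟩
    · have h : (1:ℝ) < x⁻¹ := (one_lt_inv_iff₀).mpr ⟨hx0, hx1⟩
      exact Set.mem_Ioi.mpr (Real.sqrt_pos.mpr (by linarith))
    · have h : (1:ℝ) < x⁻¹ := (one_lt_inv_iff₀).mpr ⟨hx0, hx1⟩
      show ((Real.sqrt (x⁻¹ - 1)) ^ 2 + 1)⁻¹ = x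
      rw [Real.sq_sqrt (by linarith)]
      field_simp
      ring

lemma beta_eq_integral {s : ℂ} (hs : 1 < s.re) :
    Complex.betaIntegral ((s - 1) / 2) (1 / 2) = ∫ x : ℝ, Fz s x := by
  set u : ℂ := (s - 1) / 2 with hu
  set φ : ℝ → ℝ := fun y => (y ^ 2 + 1)⁻¹ with hφ
  set φ' : ℝ → ℝ := fun y => -(2 * y) / (y ^ 2 + 1) ^ 2 with hφ'
  have hderiv : ∀ y ∈ Set.Ioi (0:ℝ), HasDerivWithinAt φ (φ' y) (Set.Ioi 0) y := by
    intro y hy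
    have h1 : HasDerivAt (fun y : ℝ => y ^ 2 + 1) (2 * y) y := by
      simpa [mul_comm] using (hasDerivAt_pow 2 y).add_const 1
    exact (h1.inv (by positivity)).hasDerivWithinAt
  have hinj : Set.InjOn φ (Set.Ioi 0) := by
    intro a ha b hb hab
    have ha' : (0:ℝ) < a := ha
    have hb' : (0:ℝ) < b := hb
    have h2 : a ^ 2 + 1 = b ^ 2 + 1 := by
      have h3 : ((a ^ 2 + 1)⁻¹ : ℝ) = (b ^ 2 + 1)⁻¹ := hab
      have := congrArg Inv.inv h3
      simpa using this
    have h3 : (a - b) * (a + b) = 0 := by linear_combination h2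
    rcases mul_eq_zero.mp h3 with h | h
    · linarith [sub_eq_zero.mp h]
    · nlinarith
  have hbeta : Complex.betaIntegral u (1/2) =
      ∫ x in Set.Ioo (0:ℝ) 1, (x : ℂ) ^ (u - 1) * (1 - (x : ℂ)) ^ ((1:ℂ)/2 - 1) := by
    rw [Complex.betaIntegral, intervalIntegral.integral_of_le zero_le_one,
      MeasureTheory.integral_Ioc_eq_integral_Ioo]
  have hsub := integral_image_eq_integral_abs_deriv_smul measurableSet_Ioi hderiv hinj
      (fun x : ℝ => (x : ℂ) ^ (u - 1) * (1 - (x : ℂ)) ^ ((1:ℂ)/2 - 1))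
  have himg : φ '' Set.Ioi 0 = Set.Ioo (0:ℝ) 1 := by rw [hφ]; exact image_phi
  rw [himg] at hsub
  have hpt : ∀ y ∈ Set.Ioi (0:ℝ),
      |φ' y| • (((φ y : ℝ) : ℂ) ^ (u - 1) * (1 - ((φ y : ℝ) : ℂ)) ^ ((1:ℂ)/2 - 1))
        = 2 * Fz s y := by
    intro y hy
    have hy' : (0:ℝ) < y := hy
    have hc : (0:ℝ) < y ^ 2 + 1 := by positivity
    set L := Real.log (y ^ 2 + 1) with hL
    set l := Real.log y with hl
    have hφy : φ y = (y ^ 2 + 1)⁻¹ := rfl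
    have e1 : ((φ y : ℝ) : ℂ) ^ (u - 1) = Complex.exp ((-(L:ℝ) : ℂ) * (u - 1)) := by
      rw [hφy, cpow_pos_eq_exp (by positivity)]
      rw [Real.log_inv]
      norm_num
      rfl
    have e2 : (1 - ((φ y : ℝ) : ℂ)) = ((y ^ 2 / (y ^ 2 + 1) : ℝ) : ℂ) := by
      rw [hφy]
      push_cast
      have : ((y:ℂ) ^ 2 + 1) ≠ 0 := by
        exact_mod_cast Complex.ofReal_ne_zero.mpr hc.ne'
      field_simp
      ring
    have e3 : ((y ^ 2 / (y ^ 2 + 1) : ℝ) : ℂ) ^ ((1:ℂ)/2 - 1)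
        = Complex.exp (((2 * l - L : ℝ) : ℂ) * ((1:ℂ)/2 - 1)) := by
      rw [cpow_pos_eq_exp (by positivity)]
      congr 2
      rw [Real.log_div (by positivity) (by positivity), Real.log_pow]
      push_cast
      ring
    have e4 : Fz s y = Complex.exp (((L:ℝ) : ℂ) * (-s / 2)) := by
      rw [Fz, cpow_pos_eq_exp hc]
    have e5 : |φ' y| = 2 * y / (y ^ 2 + 1) ^ 2 := by
      rw [hφ']
      rw [abs_div, abs_neg, abs_of_nonneg (by positivity), abs_of_nonneg (by positivity)]
    rw [e2, e1, e3, e4, e5, Complex.real_smul, ← Complex.exp_add]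
    have e6 : (-(L:ℝ) : ℂ) * (u - 1) + ((2 * l - L : ℝ) : ℂ) * ((1:ℂ)/2 - 1)
        = ((L:ℝ) : ℂ) * (-s / 2) + ((2 * L - l : ℝ) : ℂ) := by
      rw [hu]
      push_cast
      ring
    rw [e6, Complex.exp_add, ← Complex.ofReal_exp]
    have e7 : Real.exp (2 * L - l) = (y ^ 2 + 1) ^ 2 / y := by
      rw [Real.exp_sub, hl, Real.exp_log hy', two_mul, Real.exp_add, hL, Real.exp_log hc]
      ring
    rw [e7]
    push_cast
    have hcne : ((y:ℂ) ^ 2 + 1) ≠ 0 := by exact_mod_cast Complex.ofReal_ne_zero.mpr hc.ne'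
    have hyne : (y : ℂ) ≠ 0 := Complex.ofReal_ne_zero.mpr hy'.ne'
    field_simp
  rw [MeasureTheory.setIntegral_congr_fun measurableSet_Ioi hpt] at hsub
  rw [hbeta, hsub, MeasureTheory.integral_const_mul, integral_Fz_eq_two s hs]

lemma integral_Fz_eq_gamma {s : ℂ} (hs : 1 < s.re) :
    ∫ x : ℝ, Fz s x
      = (Real.sqrt Real.pi : ℂ) * Complex.Gamma ((s - 1) / 2) / Complex.Gamma (s / 2) := by
  have hu : 0 < ((s - 1) / 2).re := by
    have : ((s - 1) / 2).re = (s.re - 1) / 2 := by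
      simp [Complex.div_re, Complex.sub_re, Complex.normSq]
    rw [this]; linarith
  have hv : (0:ℝ) < ((1:ℂ)/2).re := by norm_num
  have h := Complex.Gamma_mul_Gamma_eq_betaIntegral hu hv
  rw [show (s - 1)/2 + 1/2 = s/2 by ring, beta_eq_integral hs,
    Complex.Gamma_one_half_eq] at h
  have hΓ : Complex.Gamma (s/2) ≠ 0 := by
    apply Complex.Gamma_ne_zero_of_re_pos
    have : (s / 2).re = s.re / 2 := by simp [Complex.div_re, Complex.normSq]
    rw [this]; linarith
  have hsqrt : ((Real.sqrt Real.pi : ℝ) : ℂ) = (Real.pi : ℂ) ^ ((1:ℂ)/2) := by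
    rw [Real.sqrt_eq_rpow, Complex.ofReal_cpow Real.pi_pos.le]
    norm_num
  rw [hsqrt]
  field_simp
  linear_combination -h

/-- For complex `s` with `Re(s) > 1`: for every `t > 0` the family
`k ↦ (t²k²+1)^(−s/2)` (`k ∈ ℤ`) is summable, and
`t · Σ_{k∈ℤ} (t²k²+1)^(−s/2) → √π · Γ((s−1)/2) / Γ(s/2)` as `t → 0⁺`. -/
theorem adiabatic_limit_circle_zeta (s : ℂ) (hs : 1 < s.re) :
    (∀ t : ℝ, 0 < t →
      Summable fun k : ℤ => ((t ^ 2 * (k : ℝ) ^ 2 + 1 : ℝ) : ℂ) ^ (-s / 2)) ∧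
    Tendsto (fun t : ℝ => (t : ℂ) * ∑' k : ℤ, ((t ^ 2 * (k : ℝ) ^ 2 + 1 : ℝ) : ℂ) ^ (-s / 2))
      (𝓝[>] 0)
      (𝓝 ((Real.sqrt Real.pi : ℂ) * Complex.Gamma ((s - 1) / 2) / Complex.Gamma (s / 2))) := by
  refine ⟨fun t ht => summable_aux hs ht, ?_⟩
  have key := tendsto_integral_step (s := s) hs
  rw [integral_Fz_eq_gamma hs] at key
  apply Filter.Tendsto.congr' _ key
  have hmem : Set.Ioo (0:ℝ) 1 ∈ 𝓝[>] (0:ℝ) := Ioo_mem_nhdsGT_of_mem ⟨le_refl 0, zero_lt_one⟩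
  filter_upwards [hmem] with t ht
  exact (step_identity hs ht.1 ht.2.le).symm
end

section
/- Let d ≥ 1 be an integer, k a real number, and h : ℂ × S^{d−1} → ℂ a jointly continuous function that is analytic in its first variable for each fixed point of the sphere. Define F(s) := −1/(s+k+d) · ∫_{S^{d−1}} h(s,θ) dσ(θ) for s ≠ −k−d. Then: (i) F is analytic on ℂ ∖ {−k−d}; (ii) for every complex s with Re(s) + k + d < 0 one has F(s) = ∫_{‖v‖≥1} h(s, v/‖v‖)·‖v‖^{s+k} dv; and (iii) (s+k+d)·F(s) → −∫_{S^{d−1}} h(−k−d, θ) dσ(θ) as s → −k−d. In other words, the integral in (ii), a priori defined on the half-plane Re(s) < −k−d, extends analytically to ℂ with a single simple pole at s = −k−d whose residue is −∫_{S^{d−1}} h(−k−d,·) dσ. -/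
open MeasureTheory Metric Filter Topology Set

/-- Let `d ≥ 1`, `k ∈ ℝ`, and `h(s, θ)` be jointly continuous on
`ℂ × S^{d−1}` and analytic in `s` for each fixed `θ` on the sphere.  Set
`F(s) = −1/(s+k+d) · ∫_{S^{d−1}} h(s,θ) dσ(θ)`.  Then (i) `F` is analytic on
`ℂ ∖ {−k−d}`; (ii) for `Re(s) + k + d < 0`,
`F(s) = ∫_{‖v‖≥1} h(s, v/‖v‖)·‖v‖^{s+k} dv`; (iii)
`(s+k+d)·F(s) → −∫_{S^{d−1}} h(−k−d,·) dσ` as `s → −k−d`:  the integral extends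
analytically to `ℂ` with a single simple pole at `s = −k−d`. -/
theorem analytic_extension_homogeneous_integral (d : ℕ) (hd : 1 ≤ d) (k : ℝ)
    (h : ℂ → EuclideanSpace ℝ (Fin d) → ℂ)
    (hcont : ContinuousOn (fun p : ℂ × EuclideanSpace ℝ (Fin d) => h p.1 p.2)
      (univ ×ˢ sphere (0 : EuclideanSpace ℝ (Fin d)) 1))
    (hanal : ∀ θ ∈ sphere (0 : EuclideanSpace ℝ (Fin d)) 1, ∀ s : ℂ,
      AnalyticAt ℂ (fun z => h z θ) s)
    (F : ℂ → ℂ)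
    (hF : ∀ s : ℂ, F s = -1 / (s + (k : ℂ) + (d : ℂ)) *
      ∫ θ : sphere (0 : EuclideanSpace ℝ (Fin d)) 1, h s θ
        ∂(volume : Measure (EuclideanSpace ℝ (Fin d))).toSphere) :
    (∀ s : ℂ, s ≠ -((k : ℂ) + (d : ℂ)) → AnalyticAt ℂ F s) ∧
    (∀ s : ℂ, s.re + k + d < 0 →
      F s = ∫ v in {v : EuclideanSpace ℝ (Fin d) | 1 ≤ ‖v‖},
        h s (‖v‖⁻¹ • v) * (‖v‖ : ℂ) ^ (s + (k : ℂ))) ∧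
    Tendsto (fun s : ℂ => (s + (k : ℂ) + (d : ℂ)) * F s)
      (𝓝[≠] (-((k : ℂ) + (d : ℂ))))
      (𝓝 (-∫ θ : sphere (0 : EuclideanSpace ℝ (Fin d)) 1, h (-((k : ℂ) + (d : ℂ))) θ
        ∂(volume : Measure (EuclideanSpace ℝ (Fin d))).toSphere)) := by
  haveI : Nontrivial (EuclideanSpace ℝ (Fin d)) :=
    Module.nontrivial_of_finrank_pos (R := ℝ)
      (by rw [finrank_euclideanSpace_fin]; omega)
  set σ := (volume : Measure (EuclideanSpace ℝ (Fin d))).toSphere with hσ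
  set G : ℂ → ℂ := fun s => ∫ θ : sphere (0 : EuclideanSpace ℝ (Fin d)) 1, h s θ ∂σ with hG
  -- continuity of `θ ↦ h s θ` on the (compact) sphere
  have hcθ : ∀ s : ℂ, Continuous (fun θ : sphere (0 : EuclideanSpace ℝ (Fin d)) 1 => h s (θ : EuclideanSpace ℝ (Fin d))) := by
    intro s
    simpa [Function.comp_def] using
      hcont.comp_continuous (continuous_const.prodMk continuous_subtype_val)
      (fun θ : sphere (0 : EuclideanSpace ℝ (Fin d)) 1 =>
        (⟨mem_univ s, θ.2⟩ : ((s, (θ : EuclideanSpace ℝ (Fin d))) ∈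
          univ ×ˢ sphere (0 : EuclideanSpace ℝ (Fin d)) 1)))
  have hdiffθ : ∀ θ : sphere (0 : EuclideanSpace ℝ (Fin d)) 1, Differentiable ℂ (fun z => h z (θ : EuclideanSpace ℝ (Fin d))) :=
    fun θ z => (hanal θ θ.2 z).differentiableAt
  -- G is entire
  have hGdiff : Differentiable ℂ G := by
    intro s₀
    -- bound on a compact set
    obtain ⟨C, hC⟩ : ∃ C, ∀ p ∈ (closedBall s₀ 2) ×ˢ (sphere (0 : EuclideanSpace ℝ (Fin d)) 1),
        ‖h p.1 p.2‖ ≤ C :=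
      ((isCompact_closedBall s₀ 2).prod (isCompact_sphere 0 1)).exists_bound_of_continuousOn
        (hcont.mono (prod_mono (subset_univ _) subset_rfl))
    -- sequence for measurability of the derivative
    set c : ℕ → ℂ := fun n => s₀ + ((n : ℂ) + 1)⁻¹ with hc
    have hcne : ∀ n, c n ≠ s₀ := by
      intro n hn
      have h0 : ((n : ℂ) + 1)⁻¹ = 0 := by
        have := hn
        rw [hc] at this
        simpa using this
      exact inv_ne_zero (Nat.cast_add_one_ne_zero n) h0
    have hctend : Tendsto c atTop (𝓝 s₀) := by
      have h1 : Tendsto (fun n : ℕ => ((1 / ((n : ℝ) + 1) : ℝ) : ℂ)) atTop (𝓝 ((0 : ℝ) : ℂ)) :=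
        (Complex.continuous_ofReal.tendsto _).comp tendsto_one_div_add_atTop_nhds_zero_nat
      have h2 : Tendsto (fun n : ℕ => ((n : ℂ) + 1)⁻¹) atTop (𝓝 0) := by
        have heq : (fun n : ℕ => ((n : ℂ) + 1)⁻¹)
            = fun n : ℕ => ((1 / ((n : ℝ) + 1) : ℝ) : ℂ) := by
          funext n; push_cast; rw [one_div]
        rw [heq]
        simpa using h1
      simpa using tendsto_const_nhds.add h2
    have hctend' : Tendsto c atTop (𝓝[≠] s₀) :=
      tendsto_nhdsWithin_of_tendsto_nhds_of_eventually_within _ hctend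
        (Eventually.of_forall hcne)
    have hF'meas : AEStronglyMeasurable
        (fun θ : sphere (0 : EuclideanSpace ℝ (Fin d)) 1 => deriv (fun w => h w (θ : EuclideanSpace ℝ (Fin d))) s₀) σ := by
      apply StronglyMeasurable.aestronglyMeasurable
      apply stronglyMeasurable_of_tendsto (u := atTop)
        (f := fun n (θ : sphere (0 : EuclideanSpace ℝ (Fin d)) 1) => slope (fun z => h z (θ : EuclideanSpace ℝ (Fin d))) s₀ (c n))
      · intro n
        have : (fun θ : sphere (0 : EuclideanSpace ℝ (Fin d)) 1 => slope (fun z => h z (θ : EuclideanSpace ℝ (Fin d))) s₀ (c n))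
            = fun θ : sphere (0 : EuclideanSpace ℝ (Fin d)) 1 => (h (c n) (θ : EuclideanSpace ℝ (Fin d)) - h s₀ (θ : EuclideanSpace ℝ (Fin d))) / (c n - s₀) := by
          funext θ
          rw [slope_def_field]
        rw [this]
        exact (((hcθ (c n)).sub (hcθ s₀)).div_const _).stronglyMeasurable
      · rw [tendsto_pi_nhds]
        intro θ
        have hd' : HasDerivAt (fun z => h z (θ : EuclideanSpace ℝ (Fin d))) (deriv (fun w => h w (θ : EuclideanSpace ℝ (Fin d))) s₀) s₀ :=
          ((hdiffθ θ) s₀).hasDerivAt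
        exact (hasDerivAt_iff_tendsto_slope.mp hd').comp hctend'
    have key := hasDerivAt_integral_of_dominated_loc_of_deriv_le (μ := σ)
      (F := fun z (θ : sphere (0 : EuclideanSpace ℝ (Fin d)) 1) => h z (θ : EuclideanSpace ℝ (Fin d)))
      (F' := fun z (θ : sphere (0 : EuclideanSpace ℝ (Fin d)) 1) => deriv (fun w => h w (θ : EuclideanSpace ℝ (Fin d))) z)
      (x₀ := s₀) (bound := fun _ => C) (ball_mem_nhds s₀ one_pos)
      (Eventually.of_forall fun z => (hcθ z).aestronglyMeasurable)
      ((hcθ s₀).integrable_of_hasCompactSupport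
        ((isClosed_tsupport _).isCompact))
      hF'meas
      (Eventually.of_forall fun θ => by
        intro x hx
        have hball : ∀ z ∈ sphere x 1, ‖h z (θ : EuclideanSpace ℝ (Fin d))‖ ≤ C := by
          intro z hz
          apply hC (z, (θ : EuclideanSpace ℝ (Fin d)))
          constructor
          · rw [mem_closedBall]
            have h1 : dist z x = 1 := mem_sphere.mp hz
            have h2 : dist x s₀ < 1 := mem_ball.mp hx
            calc dist z s₀ ≤ dist z x + dist x s₀ := dist_triangle _ _ _
              _ ≤ 1 + 1 := by rw [h1]; linarith
              _ = 2 := by norm_num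
          · exact θ.2
        have := Complex.norm_deriv_le_of_forall_mem_sphere_norm_le one_pos
          ((hdiffθ θ).diffContOnCl) hball
        simpa using this)
      (integrable_const C)
      (Eventually.of_forall fun θ => fun x _ => ((hdiffθ θ) x).hasDerivAt)
    exact key.2.differentiableAt
  have hGanal : ∀ s, AnalyticAt ℂ G s := fun s => hGdiff.analyticAt s
  refine ⟨?_, ?_, ?_⟩
  · -- (i) analyticity away from the pole
    intro s hs
    have hne : s + (k : ℂ) + (d : ℂ) ≠ 0 := by
      intro h0
      exact hs (by linear_combination h0)
    have h1 : AnalyticAt ℂ (fun z : ℂ => -1 / (z + (k : ℂ) + (d : ℂ))) s :=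
      analyticAt_const.div (((analyticAt_id).add analyticAt_const).add analyticAt_const) hne
    exact (h1.mul (hGanal s)).congr (Eventually.of_forall fun z => (hF z).symm)
  · -- (ii) the integral representation for Re s + k + d < 0
    intro s hs
    have hdim : Module.finrank ℝ (EuclideanSpace ℝ (Fin d)) = d := finrank_euclideanSpace_fin
    set n := Module.finrank ℝ (EuclideanSpace ℝ (Fin d)) - 1 with hn
    have hnd : (n : ℝ) = (d : ℝ) - 1 := by
      rw [hn, hdim, Nat.cast_sub hd, Nat.cast_one]
    have hA : MeasurableSet {v : EuclideanSpace ℝ (Fin d) | 1 ≤ ‖v‖} :=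
      (isClosed_le continuous_const continuous_norm).measurableSet
    set f : EuclideanSpace ℝ (Fin d) → ℂ := fun v => h s (‖v‖⁻¹ • v) * (‖v‖ : ℂ) ^ (s + (k : ℂ)) with hf'
    set G' : sphere (0 : EuclideanSpace ℝ (Fin d)) 1 × Ioi (0 : ℝ) → ℂ :=
      fun p => h s (p.1 : EuclideanSpace ℝ (Fin d)) * (if 1 ≤ (p.2 : ℝ) then ((p.2 : ℝ) : ℂ) ^ (s + (k : ℂ)) else 0)
      with hG'
    have step1 : (∫ v in {v : EuclideanSpace ℝ (Fin d) | 1 ≤ ‖v‖}, f v)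
        = ∫ p : sphere (0 : EuclideanSpace ℝ (Fin d)) 1 × Ioi (0 : ℝ), G' p
            ∂(σ.prod (.volumeIoiPow (Module.finrank ℝ (EuclideanSpace ℝ (Fin d)) - 1))) := by
      rw [← integral_indicator hA]
      rw [← restrict_compl_singleton (μ := (volume : Measure (EuclideanSpace ℝ (Fin d)))) (0 : EuclideanSpace ℝ (Fin d))]
      rw [← integral_subtype_comap (measurableSet_singleton (0 : EuclideanSpace ℝ (Fin d))).compl]
      rw [← (volume : Measure (EuclideanSpace ℝ (Fin d))).measurePreserving_homeomorphUnitSphereProd.integral_comp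
        (Homeomorph.measurableEmbedding _) G']
      congr 1
      funext x
      have hx0 : (x : EuclideanSpace ℝ (Fin d)) ≠ 0 := x.2
      simp only [G', homeomorphUnitSphereProd_apply_fst_coe, homeomorphUnitSphereProd_apply_snd_coe, one_smul, div_one, Homeomorph.homeomorph_mk_coe, Equiv.coe_fn_mk,
        indicator_apply, mem_setOf_eq]
      split_ifs with h1
      · rfl
      · rw [mul_zero]
    have step2 : (∫ p : sphere (0 : EuclideanSpace ℝ (Fin d)) 1 × Ioi (0 : ℝ), G' p
          ∂(σ.prod (.volumeIoiPow (Module.finrank ℝ (EuclideanSpace ℝ (Fin d)) - 1))))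
        = (∫ θ : sphere (0 : EuclideanSpace ℝ (Fin d)) 1, h s θ ∂σ) *
          ∫ r : Ioi (0 : ℝ), (if 1 ≤ (r : ℝ) then ((r : ℝ) : ℂ) ^ (s + (k : ℂ)) else 0)
            ∂(.volumeIoiPow n) :=
      integral_prod_mul (μ := σ) (ν := Measure.volumeIoiPow n)
        (fun θ : sphere (0 : EuclideanSpace ℝ (Fin d)) 1 => h s (θ : EuclideanSpace ℝ (Fin d)))
        (fun r : Ioi (0 : ℝ) => if 1 ≤ (r : ℝ) then ((r : ℝ) : ℂ) ^ (s + (k : ℂ)) else 0)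
    have step3 : (∫ r : Ioi (0 : ℝ),
          (if 1 ≤ (r : ℝ) then ((r : ℝ) : ℂ) ^ (s + (k : ℂ)) else 0) ∂(.volumeIoiPow n))
        = ∫ r in Ioi (1 : ℝ), ((r : ℂ)) ^ (s + (k : ℂ) + (n : ℂ)) := by
      simp only [Measure.volumeIoiPow, ENNReal.ofReal]
      rw [integral_withDensity_eq_integral_smul
        ((measurable_subtype_coe.pow_const _).real_toNNReal)]
      rw [integral_subtype_comap measurableSet_Ioi
        (fun a : ℝ => Real.toNNReal (a ^ n) • (if 1 ≤ a then ((a : ℂ)) ^ (s + (k : ℂ)) else 0))]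
      rw [setIntegral_congr_fun measurableSet_Ioi
        (g := indicator (Ici (1 : ℝ)) (fun a : ℝ => ((a : ℂ)) ^ (s + (k : ℂ) + (n : ℂ))))
        ?_]
      · have hint : Ioi (0 : ℝ) ∩ Ici (1 : ℝ) = Ici 1 :=
          inter_eq_self_of_subset_right (fun x hx => show (0:ℝ) < x from lt_of_lt_of_le zero_lt_one hx)
        rw [setIntegral_indicator measurableSet_Ici, hint, integral_Ici_eq_integral_Ioi]
      · intro a ha
        have ha0 : (0 : ℝ) < a := ha
        have haC : (a : ℂ) ≠ 0 := by exact_mod_cast ha0.ne'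
        simp only [indicator_apply, mem_Ici]
        split_ifs with h1
        · have hsplit : ((a : ℂ)) ^ (s + (k : ℂ) + (n : ℂ))
              = ((a : ℂ)) ^ (s + (k : ℂ)) * ((a : ℂ)) ^ (n : ℕ) := by
            rw [Complex.cpow_add _ _ haC, Complex.cpow_natCast]
          rw [hsplit, NNReal.smul_def, Real.coe_toNNReal _ (pow_nonneg ha0.le _),
            Complex.real_smul]
          push_cast
          ring
        · simp
    have step4 : (∫ r in Ioi (1 : ℝ), ((r : ℂ)) ^ (s + (k : ℂ) + (n : ℂ)))
        = -1 / (s + (k : ℂ) + (d : ℂ)) := by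
      have hre : (s + (k : ℂ) + (n : ℂ)).re < -1 := by
        simp only [Complex.add_re, Complex.ofReal_re, Complex.natCast_re]
        rw [hnd]
        linarith
      have hcast : ((n : ℂ)) = (d : ℂ) - 1 := by
        rw [hn, hdim, Nat.cast_sub hd, Nat.cast_one]
      rw [integral_Ioi_cpow_of_lt hre one_pos, hcast]
      have he : s + (k : ℂ) + ((d : ℂ) - 1) + 1 = s + (k : ℂ) + (d : ℂ) := by ring
      rw [he, Complex.ofReal_one, Complex.one_cpow]
    rw [hF s, step1, step2, step3, step4]
    ring
  · -- (iii) the residue limit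
    set pt : ℂ := -((k : ℂ) + (d : ℂ)) with hpt
    have hkey : ∀ s ∈ ({pt}ᶜ : Set ℂ), (s + (k : ℂ) + (d : ℂ)) * F s = -G s := by
      intro s hs
      have hne : s + (k : ℂ) + (d : ℂ) ≠ 0 := by
        intro h0
        exact hs (by simp only [mem_singleton_iff]; linear_combination h0)
      rw [hF s]
      field_simp
      simp only [hG]
    have hGc : Tendsto (fun s : ℂ => -G s) (𝓝[≠] pt) (𝓝 (-G pt)) :=
      ((hGdiff.continuous.neg.continuousAt (x := pt))).continuousWithinAt
    refine Tendsto.congr' ?_ hGc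
    filter_upwards [self_mem_nhdsWithin] with s hs
    exact (hkey s hs).symm
end

section
/- Let n ≥ 1 and let d : ℝ → M_n(ℂ) be a continuously differentiable family of invertible Hermitian matrices. Then the function μ ↦ tr((d(μ)²)^{-1/2} · d(μ)) is constant. -/
open Matrix Polynomial Filter

section Aux

variable {n : ℕ}



lemma contOn_spec (f : ℝ → ℝ) (A : Matrix (Fin n) (Fin n) ℂ) :
    ContinuousOn f (spectrum ℝ A) :=
  Matrix.finite_real_spectrum.continuousOn f

section SpecBound
attribute [local instance] Matrix.linftyOpNormedAddCommGroup Matrix.linftyOpNormedRing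
  Matrix.linftyOpNormedAlgebra

lemma spectrum_abs_le (hn : 1 ≤ n) (A : Matrix (Fin n) (Fin n) ℂ) (x : ℝ)
    (hx : x ∈ spectrum ℝ A) : |x| ≤ ∑ i, ∑ j, ‖A i j‖ := by
  have : Nonempty (Fin n) := ⟨⟨0, hn⟩⟩
  have h1 : ‖x‖ ≤ ‖A‖ := spectrum.norm_le_norm_of_mem hx
  rw [Real.norm_eq_abs] at h1
  refine h1.trans ?_
  rw [Matrix.linfty_opNorm_def]
  have h2 : (Finset.univ.sup fun i : Fin n => ∑ j, ‖A i j‖₊) ≤ ∑ i, ∑ j, ‖A i j‖₊ :=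
    Finset.sup_le fun i _ =>
      Finset.single_le_sum (f := fun i => ∑ j, ‖A i j‖₊) (fun _ _ => zero_le)
        (Finset.mem_univ i)
  calc ((Finset.univ.sup fun i : Fin n => ∑ j, ‖A i j‖₊ : NNReal) : ℝ)
      ≤ ((∑ i, ∑ j, ‖A i j‖₊ : NNReal) : ℝ) := by exact_mod_cast h2
    _ = ∑ i, ∑ j, ‖A i j‖ := by push_cast; rfl

end SpecBound

/-- Spectrum of an invertible Hermitian square lies in `[a, b]` with `a > 0`. -/
lemma spec_sq_bounds (hn : 1 ≤ n) (A : Matrix (Fin n) (Fin n) ℂ) (hA : A.IsHermitian)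
    (hu : IsUnit A) {C1 C2 : ℝ} (h1 : ∑ i, ∑ j, ‖(A ^ 2) i j‖ ≤ C1)
    (h2 : ∑ i, ∑ j, ‖(A ^ 2)⁻¹ i j‖ ≤ C2) (hC2 : 0 < C2) :
    spectrum ℝ (A ^ 2) ⊆ Set.Icc C2⁻¹ C1 := by
  intro x hx
  have hA' : IsSelfAdjoint A := hA
  -- x = y ^ 2 for y in the spectrum of A
  have hmap : spectrum ℝ (A ^ 2) = (fun y : ℝ => y ^ 2) '' spectrum ℝ A := by
    conv_lhs => rw [← cfc_pow_id (R := ℝ) A 2 hA']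
    exact cfc_map_spectrum (R := ℝ) (fun y : ℝ => y ^ 2) A hA' (contOn_spec _ _)
  rw [hmap] at hx
  obtain ⟨y, hy, rfl⟩ := hx
  have hy0 : y ≠ 0 := by
    rintro rfl
    exact spectrum.zero_notMem ℝ hu hy
  have hxpos : 0 < y ^ 2 := by positivity
  have hupper : y ^ 2 ≤ C1 := by
    have := spectrum_abs_le hn (A ^ 2) (y ^ 2) (by rw [hmap]; exact ⟨y, hy, rfl⟩)
    calc y ^ 2 ≤ |y ^ 2| := le_abs_self _
      _ ≤ C1 := this.trans h1
  -- lower bound via inverse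
  have hu2 : IsUnit (A ^ 2) := hu.pow 2
  have hxinv : (y ^ 2)⁻¹ ∈ spectrum ℝ ((A ^ 2)⁻¹) := by
    set u := hu2.unit with hudef
    have hyu : (y ^ 2) ∈ spectrum ℝ (u : Matrix (Fin n) (Fin n) ℂ) := by
      rw [hu2.unit_spec]; rw [hmap]; exact ⟨y, hy, rfl⟩
    have := spectrum.inv_mem_iff (r := Units.mk0 (y ^ 2) (ne_of_gt hxpos)) (a := u) |>.mp hyu
    rwa [Matrix.coe_units_inv, hu2.unit_spec] at this
  have hlow : (y ^ 2)⁻¹ ≤ C2 := by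
    have := spectrum_abs_le hn ((A ^ 2)⁻¹) _ hxinv
    calc (y ^ 2)⁻¹ ≤ |(y ^ 2)⁻¹| := le_abs_self _
      _ ≤ C2 := this.trans h2
  have : C2⁻¹ ≤ y ^ 2 := by
    have h := inv_anti₀ (inv_pos.mpr hxpos) hlow
    rwa [inv_inv] at h
  exact ⟨this, hupper⟩

lemma key_trace_eq (A : Matrix (Fin n) (Fin n) ℂ) (hA : A.IsHermitian) :
    (cfc (fun x : ℝ => x ^ (-(1 : ℝ) / 2)) (A ^ 2) * A).trace
      = ∑ i, (((hA.eigenvalues i ^ 2) ^ (-(1 : ℝ) / 2) * hA.eigenvalues i : ℝ) : ℂ) := by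
  have hA' : IsSelfAdjoint A := hA
  have h1 : (A : Matrix (Fin n) (Fin n) ℂ) ^ 2 = cfc (fun x : ℝ => x ^ 2) A :=
    (cfc_pow_id (R := ℝ) A 2).symm
  have h2 : cfc (fun x : ℝ => x ^ (-(1 : ℝ) / 2)) (A ^ 2)
      = cfc (fun x : ℝ => (x ^ 2) ^ (-(1 : ℝ) / 2)) A := by
    rw [h1, ← cfc_comp (fun x : ℝ => x ^ (-(1 : ℝ) / 2)) (fun x : ℝ => x ^ 2) A hA'
      (contOn_spec _ _ |>.mono (by rw [← cfc_map_spectrum (fun x : ℝ => x ^ 2) A]))]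
    rfl
  have h3 : cfc (fun x : ℝ => (x ^ 2) ^ (-(1 : ℝ) / 2) * x) A
      = cfc (fun x : ℝ => (x ^ 2) ^ (-(1 : ℝ) / 2)) A * A := by
    rw [cfc_mul _ _ A (contOn_spec _ _) (contOn_spec _ _), cfc_id' (R := ℝ) A hA']
  rw [h2, ← h3, hA.cfc_eq, Matrix.IsHermitian.cfc]
  rw [Unitary.conjStarAlgAut_apply, Matrix.trace_mul_cycle]
  have hU : (star (hA.eigenvectorUnitary : Matrix (Fin n) (Fin n) ℂ)) *
      (hA.eigenvectorUnitary : Matrix (Fin n) (Fin n) ℂ) = 1 :=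
    Unitary.coe_star_mul_self hA.eigenvectorUnitary
  rw [hU, Matrix.one_mul, Matrix.trace_diagonal]
  rfl


lemma unitary_entry_norm_le (U : Matrix (Fin n) (Fin n) ℂ)
    (hU : star U * U = 1) (i j : Fin n) : ‖U i j‖ ≤ 1 := by
  have h1 : (star U * U) j j = 1 := by rw [hU]; simp
  rw [Matrix.mul_apply] at h1
  have h2 : ∀ k, (star U) j k * U k j = ((‖U k j‖ ^ 2 : ℝ) : ℂ) := by
    intro k
    rw [Matrix.star_apply, RCLike.star_def, Complex.conj_mul']
    norm_cast
  rw [Finset.sum_congr rfl fun k _ => h2 k] at h1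
  have h3 : ∑ k, (‖U k j‖ ^ 2 : ℝ) = 1 := by exact_mod_cast h1
  have h4 : (‖U i j‖ ^ 2 : ℝ) ≤ 1 := by
    rw [← h3]
    exact Finset.single_le_sum (f := fun k => (‖U k j‖ ^ 2 : ℝ))
      (fun k _ => sq_nonneg _) (Finset.mem_univ i)
  nlinarith [norm_nonneg (U i j)]

lemma cfc_entry_bound (A : Matrix (Fin n) (Fin n) ℂ) (hA : A.IsHermitian)
    (g : ℝ → ℝ) (C : ℝ) (hC : ∀ x ∈ spectrum ℝ A, |g x| ≤ C) (i j : Fin n) :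
    ‖cfc g A i j‖ ≤ n * C := by
  rw [hA.cfc_eq, Matrix.IsHermitian.cfc]
  set U : Matrix (Fin n) (Fin n) ℂ := (hA.eigenvectorUnitary : Matrix (Fin n) (Fin n) ℂ) with hUdef
  have hUb : ∀ i j, ‖U i j‖ ≤ 1 :=
    unitary_entry_norm_le U (Unitary.coe_star_mul_self hA.eigenvectorUnitary)
  set v : Fin n → ℂ := (RCLike.ofReal ∘ g ∘ hA.eigenvalues) with hv
  rw [Unitary.conjStarAlgAut_apply, Matrix.mul_apply]
  refine (norm_sum_le _ _).trans ?_
  have key : ∀ k : Fin n,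
      ‖(U * diagonal v) i k * (star U) k j‖ ≤ C := by
    intro k
    rw [Matrix.mul_diagonal, Matrix.star_apply, norm_mul, norm_mul, norm_star]
    have hg : ‖v k‖ ≤ C := by
      simp only [hv, Function.comp_apply, RCLike.norm_ofReal]
      exact hC _ (hA.eigenvalues_mem_spectrum_real k)
    have hC0 : 0 ≤ C := le_trans (abs_nonneg _) (hC _ (hA.eigenvalues_mem_spectrum_real k))
    calc ‖U i k‖ * ‖v k‖ * ‖U j k‖
        ≤ 1 * C * 1 := by gcongr <;> [exact hUb i k; exact hUb j k]
      _ = C := by ring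
  refine (Finset.sum_le_sum fun k _ => key k).trans ?_
  simp [Finset.sum_const]



lemma trace_continuousOn (hn : 1 ≤ n) (d : ℝ → Matrix (Fin n) (Fin n) ℂ)
    (hd : Continuous d) (hherm : ∀ μ, (d μ).IsHermitian) (hinv : ∀ μ, IsUnit (d μ))
    (s t : ℝ) (hst : s ≤ t) :
    ContinuousOn (fun μ => (cfc (fun x : ℝ => x ^ (-(1 : ℝ) / 2)) ((d μ) ^ 2) * d μ).trace)
      (Set.Icc s t) := by
  set J := Set.Icc s t with hJdef
  have hJc : IsCompact J := isCompact_Icc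
  have hd2 : Continuous fun μ => d μ ^ 2 := hd.pow 2
  have hu2 : ∀ μ, IsUnit (d μ ^ 2) := fun μ => (hinv μ).pow 2
  have hsa : ∀ μ, IsSelfAdjoint (d μ) := fun μ => hherm μ
  have hsa2 : ∀ μ, IsSelfAdjoint (d μ ^ 2) := fun μ => (hsa μ).pow 2
  have hherm2 : ∀ μ, (d μ ^ 2).IsHermitian := fun μ => hsa2 μ
  -- continuity of the inverse
  have hdet : Continuous fun μ => (d μ ^ 2).det := hd2.matrix_det
  have hdet0 : ∀ μ, (d μ ^ 2).det ≠ 0 := fun μ =>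
    IsUnit.ne_zero ((Matrix.isUnit_iff_isUnit_det _).mp (hu2 μ))
  have hdinv : Continuous fun μ => (d μ ^ 2)⁻¹ := by
    have : (fun μ => (d μ ^ 2)⁻¹)
        = fun μ => ((d μ ^ 2).det)⁻¹ • (d μ ^ 2).adjugate := by
      funext μ
      rw [Matrix.inv_def, Ring.inverse_eq_inv']
    rw [this]
    exact (hdet.inv₀ hdet0).smul hd2.matrix_adjugate
  -- entrywise bounds on J
  have sum_cont : ∀ (g : ℝ → Matrix (Fin n) (Fin n) ℂ), Continuous g →
      Continuous fun μ => ∑ i, ∑ j, ‖g μ i j‖ := by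
    intro g hg
    exact continuous_finset_sum _ fun i _ => continuous_finset_sum _ fun j _ =>
      (hg.matrix_elem i j).norm
  obtain ⟨C0, hC0⟩ := hJc.exists_bound_of_continuousOn ((sum_cont d hd).continuousOn)
  obtain ⟨C1, hC1⟩ := hJc.exists_bound_of_continuousOn ((sum_cont _ hd2).continuousOn)
  obtain ⟨C2, hC2⟩ := hJc.exists_bound_of_continuousOn ((sum_cont _ hdinv).continuousOn)
  have hC0' : ∀ μ ∈ J, ∑ i, ∑ j, ‖d μ i j‖ ≤ C0 := fun μ hμ =>
    (le_abs_self _).trans (le_of_eq (Real.norm_eq_abs _).symm) |>.trans (hC0 μ hμ)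
  have hC1' : ∀ μ ∈ J, ∑ i, ∑ j, ‖(d μ ^ 2) i j‖ ≤ C1 := fun μ hμ =>
    (le_abs_self _).trans (le_of_eq (Real.norm_eq_abs _).symm) |>.trans (hC1 μ hμ)
  have hC2' : ∀ μ ∈ J, ∑ i, ∑ j, ‖(d μ ^ 2)⁻¹ i j‖ ≤ max C2 1 := fun μ hμ =>
    le_trans ((le_abs_self _).trans (le_of_eq (Real.norm_eq_abs _).symm) |>.trans (hC2 μ hμ))
      (le_max_left _ _)
  have hC0nn : 0 ≤ C0 := le_trans (norm_nonneg _) (hC0 s ⟨le_refl s, hst⟩)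
  have hmax2 : (0:ℝ) < max C2 1 := lt_of_lt_of_le one_pos (le_max_right _ _)
  set a : ℝ := (max C2 1)⁻¹ with hadef
  have ha : 0 < a := inv_pos.mpr hmax2
  -- spectra live in [a, C1]
  have hspec : ∀ μ ∈ J, spectrum ℝ (d μ ^ 2) ⊆ Set.Icc a C1 := fun μ hμ =>
    spec_sq_bounds hn (d μ) (hherm μ) (hinv μ) (hC1' μ hμ) (hC2' μ hμ) hmax2
  -- the function is continuous on [a, C1]
  have hf : ContinuousOn (fun x : ℝ => x ^ (-(1 : ℝ) / 2)) (Set.Icc a C1) := by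
    intro x hx
    have hx0 : x ≠ 0 := ne_of_gt (lt_of_lt_of_le ha hx.1)
    exact (Real.continuousAt_rpow_const x _ (Or.inl hx0)).continuousWithinAt
  -- Weierstrass approximations
  have hex : ∀ k : ℕ, ∃ p : ℝ[X], ∀ x ∈ Set.Icc a C1,
      |p.eval x - x ^ (-(1 : ℝ) / 2)| < 1 / (k + 1) :=
    fun k => exists_polynomial_near_of_continuousOn a C1 _ hf _ (by positivity)
  choose P hP using hex
  set F : ℝ → ℂ := fun μ => (cfc (fun x : ℝ => x ^ (-(1 : ℝ) / 2)) ((d μ) ^ 2) * d μ).trace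
  set G : ℕ → ℝ → ℂ := fun k μ => ((aeval (d μ ^ 2) (P k)) * d μ).trace with hGdef
  have hGcont : ∀ k, Continuous (G k) := by
    intro k
    have haev : Continuous fun μ => aeval (d μ ^ 2) (P k) := by
      have : (fun μ => aeval (d μ ^ 2) (P k)) = fun μ =>
          ∑ i ∈ Finset.range ((P k).natDegree + 1), (P k).coeff i • (d μ ^ 2) ^ i := by
        funext μ
        rw [aeval_eq_sum_range]
      rw [this]
      exact continuous_finset_sum _ fun i _ => (hd2.pow i).const_smul ((P k).coeff i)
    exact (haev.matrix_mul hd).matrix_trace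
  -- key estimate
  have hest : ∀ k : ℕ, ∀ μ ∈ J, ‖F μ - G k μ‖ ≤ (n ^ 3 * C0) * (1 / (k + 1)) := by
    intro k μ hμ
    set E : Matrix (Fin n) (Fin n) ℂ :=
      cfc (fun x : ℝ => x ^ (-(1 : ℝ) / 2) - (P k).eval x) (d μ ^ 2) with hEdef
    have hEeq : E = cfc (fun x : ℝ => x ^ (-(1 : ℝ) / 2)) (d μ ^ 2) - aeval (d μ ^ 2) (P k) := by
      rw [hEdef, cfc_sub _ _ _ (contOn_spec _ _) (contOn_spec _ _),
        cfc_polynomial (P k) (d μ ^ 2) (hsa2 μ)]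
    have hFG : F μ - G k μ = (E * d μ).trace := by
      rw [hEeq, Matrix.sub_mul, Matrix.trace_sub]
    have hEb : ∀ i j, ‖E i j‖ ≤ n * (1 / (k + 1)) := by
      intro i j
      refine cfc_entry_bound (d μ ^ 2) (hherm2 μ) _ _ (fun x hx => ?_) i j
      exact le_of_lt (by rw [abs_sub_comm]; exact hP k x (hspec μ hμ hx))
    have hdb : ∀ i j, ‖d μ i j‖ ≤ C0 := by
      intro i j
      refine le_trans ?_ (hC0' μ hμ)
      calc ‖d μ i j‖ ≤ ∑ j', ‖d μ i j'‖ :=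
            Finset.single_le_sum (f := fun j' => ‖d μ i j'‖) (fun _ _ => norm_nonneg _)
              (Finset.mem_univ j)
        _ ≤ ∑ i', ∑ j', ‖d μ i' j'‖ :=
            Finset.single_le_sum (f := fun i' => ∑ j', ‖d μ i' j'‖)
              (fun _ _ => Finset.sum_nonneg fun _ _ => norm_nonneg _) (Finset.mem_univ i)
    rw [hFG, Matrix.trace]
    refine (norm_sum_le _ _).trans ?_
    have step : ∀ i : Fin n, ‖(E * d μ).diag i‖ ≤ n * ((n : ℝ) * (1 / (k + 1)) * C0) := by
      intro i
      rw [Matrix.diag_apply, Matrix.mul_apply]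
      refine (norm_sum_le _ _).trans ?_
      have : ∀ j : Fin n, ‖E i j * d μ j i‖ ≤ (n : ℝ) * (1 / (k + 1)) * C0 := by
        intro j
        rw [norm_mul]
        have h1 := hEb i j
        have h2 := hdb j i
        have hk : (0:ℝ) ≤ 1 / (k+1) := by positivity
        have : (0:ℝ) ≤ (n : ℝ) * (1 / (k+1)) := by positivity
        calc ‖E i j‖ * ‖d μ j i‖ ≤ ((n : ℝ) * (1 / (k + 1))) * C0 := by
              exact mul_le_mul h1 h2 (norm_nonneg _) this
          _ = (n : ℝ) * (1 / (k + 1)) * C0 := rfl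
      refine (Finset.sum_le_sum fun j _ => this j).trans ?_
      simp [Finset.sum_const]
    refine (Finset.sum_le_sum fun i _ => step i).trans ?_
    simp only [Finset.sum_const, Finset.card_univ, Fintype.card_fin, nsmul_eq_mul]
    ring_nf
    nlinarith [sq_nonneg (n:ℝ)]
  -- uniform convergence
  have huc : TendstoUniformlyOn G F atTop J := by
    rw [Metric.tendstoUniformlyOn_iff]
    intro ε hε
    have hten : Tendsto (fun k : ℕ => (n ^ 3 * C0) * (1 / (k + 1))) atTop (nhds 0) := by
      have := tendsto_one_div_add_atTop_nhds_zero_nat (𝕜 := ℝ)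
      simpa using this.const_mul ((n:ℝ) ^ 3 * C0)
    filter_upwards [hten.eventually (eventually_lt_nhds hε)] with k hk μ hμ
    rw [dist_eq_norm]
    exact lt_of_le_of_lt (hest k μ hμ) hk
  exact huc.continuousOn (Filter.Eventually.of_forall (f := atTop) fun k => (hGcont k).continuousOn).frequently


end Aux



lemma sign_eval (x : ℝ) (hx : x ≠ 0) :
    (x ^ 2) ^ (-(1 : ℝ) / 2) * x = if 0 < x then (1 : ℝ) else -1 := by
  have habs : (x ^ 2) ^ (-(1 : ℝ) / 2) = |x|⁻¹ := by
    have h1 : (x : ℝ) ^ 2 = |x| ^ 2 := (sq_abs x).symm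
    rw [h1, ← Real.rpow_natCast |x| 2, ← Real.rpow_mul (abs_nonneg x)]
    norm_num
    rw [Real.rpow_neg_one]
  rw [habs]
  rcases lt_or_gt_of_ne hx with h | h
  · rw [if_neg (by linarith), abs_of_neg h]
    field_simp
  · rw [if_pos h, abs_of_pos h]
    field_simp

/-- Let `d : ℝ → M_n(ℂ)` be a `C¹` family of invertible Hermitian
matrices (with derivative family `d'`).  Then `μ ↦ tr((d(μ)²)^{−1/2} · d(μ))` -- the
signature of `d(μ)` -- is constant.  The inverse square root of the positive definite
Hermitian matrix `d(μ)²` is taken by the continuous functional calculus. -/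
theorem eta_invariant_constant_along_invertible_path (n : ℕ) (hn : 1 ≤ n)
    (d d' : ℝ → Matrix (Fin n) (Fin n) ℂ)
    (hderiv : ∀ (μ : ℝ) (i j : Fin n), HasDerivAt (fun ν => d ν i j) (d' μ i j) μ)
    (hcont : ∀ i j : Fin n, Continuous fun μ => d' μ i j)
    (hherm : ∀ μ : ℝ, (d μ).IsHermitian)
    (hinv : ∀ μ : ℝ, IsUnit (d μ)) :
    ∀ μ₁ μ₂ : ℝ,
      (cfc (fun x : ℝ => x ^ (-(1 : ℝ) / 2)) ((d μ₁) ^ 2) * d μ₁).trace =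
      (cfc (fun x : ℝ => x ^ (-(1 : ℝ) / 2)) ((d μ₂) ^ 2) * d μ₂).trace := by
  have hd : Continuous d := continuous_matrix fun i j =>
    continuous_iff_continuousAt.mpr fun μ => (hderiv μ i j).continuousAt
  set F : ℝ → ℂ := fun μ => (cfc (fun x : ℝ => x ^ (-(1 : ℝ) / 2)) ((d μ) ^ 2) * d μ).trace
    with hFdef
  -- F is integer-valued (real part, with integer value)
  have heig : ∀ μ i, (hherm μ).eigenvalues i ≠ 0 := by
    intro μ i h
    exact spectrum.zero_notMem ℝ (hinv μ) (h ▸ (hherm μ).eigenvalues_mem_spectrum_real i)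
  have hFval : ∀ μ, ∃ k : ℤ, F μ = (k : ℂ) := by
    intro μ
    refine ⟨∑ i, if 0 < (hherm μ).eigenvalues i then (1 : ℤ) else -1, ?_⟩
    rw [show F μ = _ from key_trace_eq (d μ) (hherm μ),
      Finset.sum_congr rfl fun i _ => congrArg Complex.ofReal (sign_eval _ (heig μ i))]
    push_cast [apply_ite]
    rfl
  -- suffices for ordered pairs
  suffices H : ∀ a b : ℝ, a ≤ b → F a = F b by
    intro μ₁ μ₂
    rcases le_total μ₁ μ₂ with h | h
    · exact H μ₁ μ₂ h
    · exact (H μ₂ μ₁ h).symm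
  intro a b hab
  have hFc : ContinuousOn F (Set.Icc a b) :=
    trace_continuousOn hn d hd hherm hinv a b hab
  set S : ℝ → ℝ := fun μ => (F μ).re with hSdef
  have hSc : ContinuousOn S (Set.Icc a b) := Complex.continuous_re.comp_continuousOn hFc
  have hSval : ∀ μ, ∃ k : ℤ, S μ = (k : ℝ) := by
    intro μ
    obtain ⟨k, hk⟩ := hFval μ
    exact ⟨k, by rw [hSdef]; simp [hk]⟩
  have hFS : ∀ μ, F μ = ((S μ : ℝ) : ℂ) := by
    intro μ
    obtain ⟨k, hk⟩ := hFval μ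
    have hs : S μ = (k : ℝ) := by simp only [hSdef]; rw [hk]; simp
    rw [hk, hs]
    push_cast
    rfl
  have hSab : S a = S b := by
    by_contra hne
    obtain ⟨ka, hka⟩ := hSval a
    obtain ⟨kb, hkb⟩ := hSval b
    have key : ∀ c : ℝ, c ∈ Set.Icc (S a) (S b) ∪ Set.Icc (S b) (S a) →
        ∃ μ ∈ Set.Icc a b, S μ = c := by
      intro c hc
      rcases hc with hc | hc
      · obtain ⟨μ, hμ, hμc⟩ := intermediate_value_Icc hab hSc hc
        exact ⟨μ, hμ, hμc⟩
      · obtain ⟨μ, hμ, hμc⟩ := intermediate_value_Icc' hab hSc hc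
        exact ⟨μ, hμ, hμc⟩
    rcases lt_or_gt_of_ne hne with h | h
    · have hklt : ka < kb := by rw [hka, hkb] at h; exact_mod_cast h
      have hk1 : (ka : ℝ) + 1 ≤ kb := by exact_mod_cast hklt
      have hm1 : S a ≤ (ka : ℝ) + 1/2 := by rw [hka]; linarith
      have hm2 : (ka : ℝ) + 1/2 ≤ S b := by rw [hkb]; linarith
      obtain ⟨μ, _, hμc⟩ := key ((ka : ℝ) + 1/2) (Or.inl ⟨hm1, hm2⟩)
      obtain ⟨k, hk⟩ := hSval μ
      rw [hk] at hμc
      have : (2 * k : ℝ) = 2 * ka + 1 := by linarith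
      have : (2 * k : ℤ) = 2 * ka + 1 := by exact_mod_cast this
      omega
    · have hklt : kb < ka := by rw [hka, hkb] at h; exact_mod_cast h
      have hk1 : (kb : ℝ) + 1 ≤ ka := by exact_mod_cast hklt
      have hm1 : S b ≤ (kb : ℝ) + 1/2 := by rw [hkb]; linarith
      have hm2 : (kb : ℝ) + 1/2 ≤ S a := by rw [hka]; linarith
      obtain ⟨μ, _, hμc⟩ := key ((kb : ℝ) + 1/2) (Or.inr ⟨hm1, hm2⟩)
      obtain ⟨k, hk⟩ := hSval μ
      rw [hk] at hμc
      have : (2 * k : ℝ) = 2 * kb + 1 := by linarith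
      have : (2 * k : ℤ) = 2 * kb + 1 := by exact_mod_cast this
      omega
  rw [hFS a, hFS b, hSab]
end
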